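/- Let ε > 0 and let M be a matrix game with value v. If the action sequences of both players satisfy limsup_{t→∞} r(t) ≤ ε (player 1) and limsup_{t→∞} r₂(t) ≤ ε (player 2), then for every δ > 0 there exists t₀ ∈ ℕ such that for every t ≥ t₀ the empirical frequencies (σ̂₁(t), σ̂₂(t)) form a (4ε + δ)-equilibrium of M. -/

import Mathlib

open Filter Finset

noncomputable section

/-- A mixed strategy: a probability vector over `Fin k`. -/
def IsMixed {k : ℕ} (σ : Fin k → ℝ) : Prop :=
  (∀ i, 0 ≤ σ i) ∧ ∑ i, σ i = 1

/-- Expected payoff `σ₁ M σ₂` to player 1. -/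
def pay {m n : ℕ} (M : Fin m → Fin n → ℝ) (σ₁ : Fin m → ℝ) (σ₂ : Fin n → ℝ) : ℝ :=
  ∑ i, ∑ j, σ₁ i * M i j * σ₂ j

/-- `u(br, σ₂) = max_{σ₁} σ₁ M σ₂`. -/
def brVal1 {m n : ℕ} (M : Fin m → Fin n → ℝ) (σ₂ : Fin n → ℝ) : ℝ :=
  sSup {x : ℝ | ∃ σ₁, IsMixed σ₁ ∧ x = pay M σ₁ σ₂}

/-- `u(σ₁, br) = min_{σ₂} σ₁ M σ₂`. -/
def brVal2 {m n : ℕ} (M : Fin m → Fin n → ℝ) (σ₁ : Fin m → ℝ) : ℝ :=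
  sInf {x : ℝ | ∃ σ₂, IsMixed σ₂ ∧ x = pay M σ₁ σ₂}

/-- `M` has value `v`: `max_{σ₁} min_{σ₂} σ₁ M σ₂ = min_{σ₂} max_{σ₁} σ₁ M σ₂ = v`. -/
def HasValue {m n : ℕ} (M : Fin m → Fin n → ℝ) (v : ℝ) : Prop :=
  sSup {x : ℝ | ∃ σ₁, IsMixed σ₁ ∧ x = brVal2 M σ₁} = v ∧
  sInf {x : ℝ | ∃ σ₂, IsMixed σ₂ ∧ x = brVal1 M σ₂} = v

/-- `(σ₁, σ₂)` is an `ε`-equilibrium of `M`. -/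
def IsEpsEquilibrium {m n : ℕ} (M : Fin m → Fin n → ℝ) (ε : ℝ)
    (σ₁ : Fin m → ℝ) (σ₂ : Fin n → ℝ) : Prop :=
  brVal1 M σ₂ - pay M σ₁ σ₂ ≤ ε ∧ pay M σ₁ σ₂ - brVal2 M σ₁ ≤ ε

/-- Empirical frequencies of the action sequence `a` over steps `1, …, t`. -/
def empFreq {k : ℕ} (a : ℕ → Fin k) (t : ℕ) : Fin k → ℝ :=
  fun x => (((Finset.Icc 1 t).filter (fun s => a s = x)).card : ℝ) / t

/-- `g(t)`: average payoff to player 1 over steps `1, …, t`. -/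
def avgPay {m n : ℕ} (M : Fin (m+1) → Fin (n+1) → ℝ)
    (iseq : ℕ → Fin (m+1)) (jseq : ℕ → Fin (n+1)) (t : ℕ) : ℝ :=
  (∑ s ∈ Finset.Icc 1 t, M (iseq s) (jseq s)) / t

/-- `g_max(t)`: maximal average payoff over player 1's pure actions. -/
def gmax {m n : ℕ} (M : Fin (m+1) → Fin (n+1) → ℝ)
    (jseq : ℕ → Fin (n+1)) (t : ℕ) : ℝ :=
  (Finset.univ.sup' Finset.univ_nonempty (fun i => ∑ s ∈ Finset.Icc 1 t, M i (jseq s))) / t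

/-- `r(t)`: average regret of player 1. -/
def regret1 {m n : ℕ} (M : Fin (m+1) → Fin (n+1) → ℝ)
    (iseq : ℕ → Fin (m+1)) (jseq : ℕ → Fin (n+1)) (t : ℕ) : ℝ :=
  gmax M jseq t - avgPay M iseq jseq t

/-- `r₂(t)`: average regret of player 2 (whose payoffs are `1 - a_{ij}`). -/
def regret2 {m n : ℕ} (M : Fin (m+1) → Fin (n+1) → ℝ)
    (iseq : ℕ → Fin (m+1)) (jseq : ℕ → Fin (n+1)) (t : ℕ) : ℝ :=
  (Finset.univ.sup' Finset.univ_nonempty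
      (fun j => ∑ s ∈ Finset.Icc 1 t, (1 - M (iseq s) j))) / t -
    (∑ s ∈ Finset.Icc 1 t, (1 - M (iseq s) (jseq s))) / t

lemma pay_nonneg {m n : ℕ} {M : Fin m → Fin n → ℝ} (hM : ∀ i j, M i j ∈ Set.Icc (0:ℝ) 1)
    {σ₁ σ₂} (h1 : IsMixed σ₁) (h2 : IsMixed σ₂) : 0 ≤ pay M σ₁ σ₂ := by
  apply Finset.sum_nonneg; intro i _
  apply Finset.sum_nonneg; intro j _
  exact mul_nonneg (mul_nonneg (h1.1 i) (hM i j).1) (h2.1 j)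

lemma pay_le_one {m n : ℕ} {M : Fin m → Fin n → ℝ} (hM : ∀ i j, M i j ∈ Set.Icc (0:ℝ) 1)
    {σ₁ σ₂} (h1 : IsMixed σ₁) (h2 : IsMixed σ₂) : pay M σ₁ σ₂ ≤ 1 := by
  have h : pay M σ₁ σ₂ ≤ ∑ i, ∑ j, σ₁ i * σ₂ j := by
    apply Finset.sum_le_sum; intro i _
    apply Finset.sum_le_sum; intro j _
    calc σ₁ i * M i j * σ₂ j ≤ σ₁ i * 1 * σ₂ j := by
          apply mul_le_mul_of_nonneg_right _ (h2.1 j)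
          exact mul_le_mul_of_nonneg_left (hM i j).2 (h1.1 i)
      _ = σ₁ i * σ₂ j := by ring
  calc pay M σ₁ σ₂ ≤ ∑ i, ∑ j, σ₁ i * σ₂ j := h
    _ = (∑ i, σ₁ i) * (∑ j, σ₂ j) := by rw [Finset.sum_mul_sum]
    _ = 1 := by rw [h1.2, h2.2]; ring

lemma empFreq_isMixed {k : ℕ} (a : ℕ → Fin k) {t : ℕ} (ht : 1 ≤ t) : IsMixed (empFreq a t) := by
  constructor
  · intro x; unfold empFreq; positivity
  · unfold empFreq
    rw [← Finset.sum_div, div_eq_one_iff_eq (by positivity)]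
    norm_cast
    rw [← Finset.card_eq_sum_card_fiberwise (f := a) (t := Finset.univ)
      (fun x _ => Finset.mem_univ _)]
    simp [Nat.card_Icc]

lemma empFreq_apply {k : ℕ} (a : ℕ → Fin k) (t : ℕ) (x : Fin k) :
    empFreq a t x = (∑ s ∈ Finset.Icc 1 t, if a s = x then (1:ℝ) else 0) / t := by
  unfold empFreq
  rw [Finset.card_filter]
  push_cast
  rfl

lemma pay_empFreq_right {m n : ℕ} (M : Fin m → Fin n → ℝ) (σ₁ : Fin m → ℝ)
    (jseq : ℕ → Fin n) (t : ℕ) :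
    pay M σ₁ (empFreq jseq t) = (∑ i, σ₁ i * ∑ s ∈ Finset.Icc 1 t, M i (jseq s)) / t := by
  unfold pay
  rw [Finset.sum_div]
  refine Finset.sum_congr rfl fun i _ => ?_
  simp only [empFreq_apply]
  rw [Finset.mul_sum, Finset.sum_div]
  have step : ∀ j : Fin n, σ₁ i * M i j *
      ((∑ s ∈ Finset.Icc 1 t, if jseq s = j then (1:ℝ) else 0) / t)
      = (∑ s ∈ Finset.Icc 1 t, if jseq s = j then σ₁ i * M i j else 0) / t := by
    intro j
    rw [mul_div_assoc', Finset.mul_sum]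
    simp [mul_ite]
  rw [Finset.sum_congr rfl fun j _ => step j, ← Finset.sum_div, Finset.sum_comm]
  rw [Finset.sum_div]
  refine Finset.sum_congr rfl fun s _ => ?_
  rw [Finset.sum_ite_eq]
  simp

lemma pay_empFreq_left {m n : ℕ} (M : Fin m → Fin n → ℝ) (σ₂ : Fin n → ℝ)
    (iseq : ℕ → Fin m) (t : ℕ) :
    pay M (empFreq iseq t) σ₂ = (∑ j, σ₂ j * ∑ s ∈ Finset.Icc 1 t, M (iseq s) j) / t := by
  unfold pay
  rw [Finset.sum_comm]
  rw [Finset.sum_div]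
  refine Finset.sum_congr rfl fun j _ => ?_
  simp only [empFreq_apply]
  rw [Finset.mul_sum, Finset.sum_div]
  have step : ∀ i : Fin m,
      ((∑ s ∈ Finset.Icc 1 t, if iseq s = i then (1:ℝ) else 0) / t) * M i j * σ₂ j
      = (∑ s ∈ Finset.Icc 1 t, if iseq s = i then σ₂ j * M i j else 0) / t := by
    intro i
    rw [div_mul_eq_mul_div, div_mul_eq_mul_div, Finset.sum_mul, Finset.sum_mul]
    congr 1
    refine Finset.sum_congr rfl fun s _ => ?_
    split <;> ring
  rw [Finset.sum_congr rfl fun i _ => step i, ← Finset.sum_div, Finset.sum_comm]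
  rw [Finset.sum_div]
  refine Finset.sum_congr rfl fun s _ => ?_
  rw [Finset.sum_ite_eq]
  simp

/-- If both players' average regrets satisfy `limsup r(t) ≤ ε`, then for every
`δ > 0` there exists `t₀` such that for all `t ≥ t₀` the empirical frequencies form a
`(4ε + δ)`-equilibrium of `M`. -/
theorem eps_hannan_implies_empirical_equilibrium (m n : ℕ) (M : Fin (m+1) → Fin (n+1) → ℝ)
    (hM : ∀ i j, M i j ∈ Set.Icc (0:ℝ) 1)
    (v ε : ℝ) (hε : 0 < ε) (hv : HasValue M v)
    (iseq : ℕ → Fin (m+1)) (jseq : ℕ → Fin (n+1))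
    (hr1 : Filter.limsup (fun t => regret1 M iseq jseq t) Filter.atTop ≤ ε)
    (hr2 : Filter.limsup (fun t => regret2 M iseq jseq t) Filter.atTop ≤ ε) :
    ∀ δ > (0:ℝ), ∃ t₀ : ℕ, ∀ t ≥ t₀,
      IsEpsEquilibrium M (4 * ε + δ) (empFreq iseq t) (empFreq jseq t) := by
  intro δ hδ
  set ε' : ℝ := ε + δ / 2 with hε'def
  -- boundedness of the regrets from above (eventually)
  have hcard : ∀ t : ℕ, 1 ≤ t → ((Finset.Icc 1 t).card : ℝ) = t := by
    intro t ht; simp [Nat.card_Icc]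
  have hb1 : Filter.IsBoundedUnder (· ≤ ·) Filter.atTop (fun t => regret1 M iseq jseq t) := by
    refine ⟨1, ?_⟩
    rw [Filter.eventually_map]
    filter_upwards [Filter.eventually_ge_atTop 1] with t ht
    have htR : (0:ℝ) < t := by exact_mod_cast Nat.lt_of_lt_of_le Nat.zero_lt_one ht
    have h1 : gmax M jseq t ≤ 1 := by
      unfold gmax
      rw [div_le_one htR]
      apply Finset.sup'_le
      intro i _
      calc ∑ s ∈ Finset.Icc 1 t, M i (jseq s) ≤ ∑ s ∈ Finset.Icc 1 t, 1 :=
            Finset.sum_le_sum (fun s _ => (hM i (jseq s)).2)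
        _ = t := by rw [Finset.sum_const, nsmul_eq_mul, mul_one, hcard t ht]
    have h2 : 0 ≤ avgPay M iseq jseq t := by
      unfold avgPay
      apply div_nonneg _ htR.le
      exact Finset.sum_nonneg fun s _ => (hM _ _).1
    unfold regret1; linarith
  have hb2 : Filter.IsBoundedUnder (· ≤ ·) Filter.atTop (fun t => regret2 M iseq jseq t) := by
    refine ⟨1, ?_⟩
    rw [Filter.eventually_map]
    filter_upwards [Filter.eventually_ge_atTop 1] with t ht
    have htR : (0:ℝ) < t := by exact_mod_cast Nat.lt_of_lt_of_le Nat.zero_lt_one ht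
    have h1 : (Finset.univ.sup' Finset.univ_nonempty
        (fun j => ∑ s ∈ Finset.Icc 1 t, (1 - M (iseq s) j))) / t ≤ 1 := by
      rw [div_le_one htR]
      apply Finset.sup'_le
      intro j _
      calc ∑ s ∈ Finset.Icc 1 t, (1 - M (iseq s) j) ≤ ∑ s ∈ Finset.Icc 1 t, 1 :=
            Finset.sum_le_sum (fun s _ => by linarith [(hM (iseq s) j).1])
        _ = t := by rw [Finset.sum_const, nsmul_eq_mul, mul_one, hcard t ht]
    have h2 : 0 ≤ (∑ s ∈ Finset.Icc 1 t, (1 - M (iseq s) (jseq s))) / t := by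
      apply div_nonneg _ htR.le
      exact Finset.sum_nonneg fun s _ => by linarith [(hM (iseq s) (jseq s)).2]
    unfold regret2; linarith
  have hev1 : ∀ᶠ t in Filter.atTop, regret1 M iseq jseq t < ε' :=
    Filter.eventually_lt_of_limsup_lt (lt_of_le_of_lt hr1 (by rw [hε'def]; linarith)) hb1
  have hev2 : ∀ᶠ t in Filter.atTop, regret2 M iseq jseq t < ε' :=
    Filter.eventually_lt_of_limsup_lt (lt_of_le_of_lt hr2 (by rw [hε'def]; linarith)) hb2
  have hev : ∀ᶠ t in Filter.atTop, regret1 M iseq jseq t < ε' ∧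
      regret2 M iseq jseq t < ε' ∧ 1 ≤ t := by
    filter_upwards [hev1, hev2, Filter.eventually_ge_atTop 1] with t h1 h2 h3
    exact ⟨h1, h2, h3⟩
  obtain ⟨t₀, ht₀⟩ := Filter.eventually_atTop.mp hev
  refine ⟨t₀, fun t ht => ?_⟩
  obtain ⟨h1, h2, ht1⟩ := ht₀ t ht
  -- setup
  have htR : (0:ℝ) < t := by exact_mod_cast Nat.lt_of_lt_of_le Nat.zero_lt_one ht1
  set σ₁ := empFreq iseq t with hσ₁def
  set σ₂ := empFreq jseq t with hσ₂def
  have hσ₁ : IsMixed σ₁ := empFreq_isMixed iseq ht1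
  have hσ₂ : IsMixed σ₂ := empFreq_isMixed jseq ht1
  set g := avgPay M iseq jseq t with hgdef
  set S1 := Finset.univ.sup' Finset.univ_nonempty
    (fun i => ∑ s ∈ Finset.Icc 1 t, M i (jseq s)) with hS1def
  set S2 := Finset.univ.sup' Finset.univ_nonempty
    (fun j => ∑ s ∈ Finset.Icc 1 t, (1 - M (iseq s) j)) with hS2def
  have bddA : BddAbove {x : ℝ | ∃ τ, IsMixed τ ∧ x = pay M τ σ₂} := by
    refine ⟨1, fun x hx => ?_⟩
    obtain ⟨τ, hτ, rfl⟩ := hx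
    exact pay_le_one hM hτ hσ₂
  have bddB : BddBelow {x : ℝ | ∃ τ, IsMixed τ ∧ x = pay M σ₁ τ} := by
    refine ⟨0, fun x hx => ?_⟩
    obtain ⟨τ, hτ, rfl⟩ := hx
    exact pay_nonneg hM hσ₁ hτ
  have memA : pay M σ₁ σ₂ ∈ {x : ℝ | ∃ τ, IsMixed τ ∧ x = pay M τ σ₂} := ⟨σ₁, hσ₁, rfl⟩
  have memB : pay M σ₁ σ₂ ∈ {x : ℝ | ∃ τ, IsMixed τ ∧ x = pay M σ₁ τ} := ⟨σ₂, hσ₂, rfl⟩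
  have stepC : pay M σ₁ σ₂ ≤ brVal1 M σ₂ := le_csSup bddA memA
  have stepD : brVal2 M σ₁ ≤ pay M σ₁ σ₂ := csInf_le bddB memB
  -- Step A : brVal1 M σ₂ ≤ gmax
  have stepA : brVal1 M σ₂ ≤ gmax M jseq t := by
    apply csSup_le ⟨_, memA⟩
    rintro x ⟨τ, hτ, rfl⟩
    rw [hσ₂def, pay_empFreq_right]
    unfold gmax
    rw [div_le_div_iff_of_pos_right htR] -- maybe wrong name
    calc ∑ i, τ i * ∑ s ∈ Finset.Icc 1 t, M i (jseq s)
        ≤ ∑ i, τ i * S1 := by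
          apply Finset.sum_le_sum
          intro i _
          have hs : (∑ s ∈ Finset.Icc 1 t, M i (jseq s)) ≤ S1 := by
            rw [hS1def]
            exact Finset.le_sup' (fun i' => ∑ s ∈ Finset.Icc 1 t, M i' (jseq s))
              (Finset.mem_univ i)
          exact mul_le_mul_of_nonneg_left hs (hτ.1 i)
      _ = S1 := by rw [← Finset.sum_mul, hτ.2, one_mul]
  -- Step B : gmax ≤ g + ε'
  have stepB : gmax M jseq t ≤ g + ε' := by
    have := h1
    unfold regret1 at this
    rw [← hgdef] at this
    linarith
  -- Step E : g - ε' ≤ brVal2 M σ₁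
  have hsum1 : ∀ f : ℕ → ℝ, ∑ s ∈ Finset.Icc 1 t, ((1:ℝ) - f s)
      = (t : ℝ) - ∑ s ∈ Finset.Icc 1 t, f s := by
    intro f
    rw [Finset.sum_sub_distrib, Finset.sum_const, nsmul_eq_mul, mul_one, hcard t ht1]
  have h2' : S2 / t ≤ ε' + 1 - g := by
    have := h2
    unfold regret2 at this
    rw [← hS2def, hsum1 (fun s => M (iseq s) (jseq s))] at this
    have hg : (↑t - ∑ s ∈ Finset.Icc 1 t, M (iseq s) (jseq s)) / ↑t = 1 - g := by
      rw [hgdef]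
      unfold avgPay
      rw [sub_div, div_self (ne_of_gt htR)]
    rw [hg] at this
    linarith
  have stepE : g - ε' ≤ brVal2 M σ₁ := by
    apply le_csInf ⟨_, memB⟩
    rintro x ⟨τ, hτ, rfl⟩
    rw [hσ₁def, pay_empFreq_left]
    have key : ∀ j : Fin (n+1), (t : ℝ) - S2 ≤ ∑ s ∈ Finset.Icc 1 t, M (iseq s) j := by
      intro j
      have hle : ∑ s ∈ Finset.Icc 1 t, ((1:ℝ) - M (iseq s) j) ≤ S2 := by
        rw [hS2def]
        exact Finset.le_sup' (fun j' => ∑ s ∈ Finset.Icc 1 t, (1 - M (iseq s) j'))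
          (Finset.mem_univ j)
      rw [hsum1 (fun s => M (iseq s) j)] at hle
      linarith
    have : ((t : ℝ) - S2) ≤ ∑ j, τ j * ∑ s ∈ Finset.Icc 1 t, M (iseq s) j := by
      calc ((t:ℝ) - S2) = ∑ j, τ j * ((t:ℝ) - S2) := by rw [← Finset.sum_mul, hτ.2, one_mul]
        _ ≤ ∑ j, τ j * ∑ s ∈ Finset.Icc 1 t, M (iseq s) j :=
            Finset.sum_le_sum fun j _ => mul_le_mul_of_nonneg_left (key j) (hτ.1 j)
    have hfin : ((t:ℝ) - S2) / t ≤ (∑ j, τ j * ∑ s ∈ Finset.Icc 1 t, M (iseq s) j) / t := by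
      exact div_le_div_of_nonneg_right this htR.le
    have hts : ((t:ℝ) - S2) / t = 1 - S2 / t := by
      rw [sub_div, div_self (ne_of_gt htR)]
    linarith [hfin, hts ▸ hfin]
  clear_value ε' σ₁ σ₂ g S1 S2
  constructor
  · linarith [stepA, stepB, stepD, stepE]
  · linarith [stepC, stepA, stepB, stepE]

end
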